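/- The function g(x) = -tanh(x) + x(1 - tanh(x)^2) is strictly decreasing on (0, ∞), since its derivative equals -2 x tanh(x)(1 - tanh(x)^2), which is negative for x > 0. -/

import Mathlib

open Real

lemma hasDerivAt_tanh' (x : ℝ) :
    HasDerivAt Real.tanh (1 - Real.tanh x ^ 2) x := by
  have hc : Real.cosh x ≠ 0 := (Real.cosh_pos x).ne'
  have h := (Real.hasDerivAt_sinh x).div (Real.hasDerivAt_cosh x) hc
  have heq : (fun y => Real.sinh y / Real.cosh y) = Real.tanh := by
    funext y; rw [Real.tanh_eq_sinh_div_cosh]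
  rw [show (Real.sinh / Real.cosh) = fun y => Real.sinh y / Real.cosh y from rfl, heq] at h
  refine h.congr_deriv ?_
  rw [Real.tanh_eq_sinh_div_cosh]
  have h1 : Real.cosh x ^ 2 - Real.sinh x ^ 2 = 1 := Real.cosh_sq_sub_sinh_sq x
  field_simp

lemma tanh_sq_lt_one (x : ℝ) : Real.tanh x ^ 2 < 1 := by
  rw [Real.tanh_eq_sinh_div_cosh, div_pow]
  rw [div_lt_one (by positivity)]
  nlinarith [Real.cosh_sq_sub_sinh_sq x]

lemma tanh_pos_of_pos {x : ℝ} (hx : 0 < x) : 0 < Real.tanh x := by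
  rw [Real.tanh_eq_sinh_div_cosh]
  exact div_pos (Real.sinh_pos_iff.2 hx) (Real.cosh_pos x)

lemma g_hasDeriv (x : ℝ) : HasDerivAt (fun x : ℝ => -Real.tanh x + x * (1 - Real.tanh x ^ 2))
    (-2 * x * Real.tanh x * (1 - Real.tanh x ^ 2)) x := by
  have ht := hasDerivAt_tanh' x
  have h1 : HasDerivAt (fun y : ℝ => -Real.tanh y) (-(1 - Real.tanh x ^ 2)) x := ht.neg
  have h2 : HasDerivAt (fun y : ℝ => 1 - Real.tanh y ^ 2)
      (0 - 2 * Real.tanh x ^ 1 * (1 - Real.tanh x ^ 2)) x :=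
    (hasDerivAt_const x 1).sub ((ht.pow 2))
  have h3 := (hasDerivAt_id x).mul h2
  have h := h1.add h3
  refine h.congr_deriv ?_
  simp only [id]; ring

theorem g_strictAntiOn_deriv :
    StrictAntiOn (fun x : ℝ => -Real.tanh x + x * (1 - Real.tanh x ^ 2)) (Set.Ioi 0) ∧
    (∀ x : ℝ, HasDerivAt (fun x : ℝ => -Real.tanh x + x * (1 - Real.tanh x ^ 2))
      (-2 * x * Real.tanh x * (1 - Real.tanh x ^ 2)) x) ∧
    (∀ x : ℝ, 0 < x → -2 * x * Real.tanh x * (1 - Real.tanh x ^ 2) < 0) := by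
  have hneg : ∀ x : ℝ, 0 < x → -2 * x * Real.tanh x * (1 - Real.tanh x ^ 2) < 0 := by
    intro x hx
    have h1 := tanh_pos_of_pos hx
    have h2 := _root_.tanh_sq_lt_one x
    nlinarith [mul_pos (mul_pos hx h1) (sub_pos.2 h2)]
  refine ⟨?_, g_hasDeriv, hneg⟩
  apply StrictAntiOn.mono (s := Set.Ici (0:ℝ)) ?_ Set.Ioi_subset_Ici_self
  apply strictAntiOn_of_hasDerivWithinAt_neg (convex_Ici 0)
    (fun x _ => (g_hasDeriv x).continuousAt.continuousWithinAt)
    (fun x hx => (g_hasDeriv x).hasDerivWithinAt)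
  intro x hx
  exact hneg x (by simpa using hx)
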